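/- Let A ⊕ B = ℤ/Mℤ be a tiling of ℤ/Mℤ and let x, x' ∈ ℤ/Mℤ with gcd(x - x', M) = M / p for a prime p with p² ∣ M. Write x = a + b and x' = a' + b' with a, a' ∈ A, b, b' ∈ B. Then either p^{n} ∣ (a - a') or p^{n} ∣ (b - b'), where p^n is the exact power of p dividing M; moreover p^{n-1} divides both a - a' and b - b'. -/

import Mathlib

open Finset Function


section Aux

variable {M : ℕ}

/-- bridge: divisibility in `ZMod M` by a divisor of `M` equals divisibility of `val`. -/
lemma zmod_dvd_iff [NeZero M] {k : ℕ} (hk : k ∣ M) (c : ZMod M) :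
    ((k : ZMod M)) ∣ c ↔ k ∣ c.val := by
  constructor
  · rintro ⟨t, rfl⟩
    have h1 : ((k * t.val : ℕ) : ZMod M) = (k : ZMod M) * t := by
      push_cast
      rw [ZMod.natCast_val, ZMod.cast_id]
    have h2 : ((k : ZMod M) * t).val = (k * t.val) % M := by
      rw [← h1, ZMod.val_natCast]
    rw [h2]
    exact (Nat.dvd_mod_iff hk).mpr ⟨t.val, rfl⟩
  · rintro ⟨t, ht⟩
    refine ⟨(t : ZMod M), ?_⟩
    have : c = ((c.val : ℕ) : ZMod M) := by rw [ZMod.natCast_val, ZMod.cast_id]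
    rw [this, ht]
    push_cast
    ring

end Aux


/-- `A ⊕ B = ℤ_M`: every element has a unique representation `a + b`, `a ∈ A`, `b ∈ B`. -/
def IsTiling {M : ℕ} (A B : Finset (ZMod M)) : Prop :=
  ∀ z : ZMod M, ∃! ab : ZMod M × ZMod M, ab.1 ∈ A ∧ ab.2 ∈ B ∧ ab.1 + ab.2 = z

section Aux

variable {M : ℕ}

/-- the number of representations `z = a + r * b`. -/
def Nfun (A B : Finset (ZMod M)) (r : ℕ) (z : ZMod M) : ℕ :=
  ((A ×ˢ B).filter fun ab => ab.1 + (r : ZMod M) * ab.2 = z).card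

lemma tiling_card [NeZero M] {A B : Finset (ZMod M)} (hT : IsTiling A B) :
    A.card * B.card = M := by
  classical
  rw [← Finset.card_product]
  have : (A ×ˢ B).card = (Finset.univ : Finset (ZMod M)).card := by
    apply Finset.card_bij (fun ab _ => ab.1 + ab.2)
    · intro ab _; exact Finset.mem_univ _
    · intro ab hab ab' hab' h
      obtain ⟨w, hw, huniq⟩ := hT (ab.1 + ab.2)
      rw [Finset.mem_product] at hab hab'
      have e1 := huniq ab ⟨hab.1, hab.2, rfl⟩
      have e2 := huniq ab' ⟨hab'.1, hab'.2, h.symm⟩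
      rw [e1, e2]
    · intro z _
      obtain ⟨w, ⟨hw1, hw2, hw3⟩, _⟩ := hT z
      exact ⟨w, Finset.mem_product.mpr ⟨hw1, hw2⟩, hw3⟩
  rw [this, Finset.card_univ, ZMod.card]

lemma Nfun_one [NeZero M] {A B : Finset (ZMod M)} (hT : IsTiling A B) (z : ZMod M) :
    Nfun A B 1 z = 1 := by
  classical
  obtain ⟨w, ⟨hw1, hw2, hw3⟩, huniq⟩ := hT z
  rw [Nfun, Finset.card_eq_one]
  refine ⟨w, ?_⟩
  ext ab
  simp only [Finset.mem_filter, Finset.mem_product, Finset.mem_singleton]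
  constructor
  · rintro ⟨⟨h1, h2⟩, h3⟩
    exact huniq ab ⟨h1, h2, by simpa using h3⟩
  · rintro rfl
    exact ⟨⟨hw1, hw2⟩, by simpa using hw3⟩

lemma Nfun_sum [NeZero M] (A B : Finset (ZMod M)) (r : ℕ) :
    ∑ z : ZMod M, Nfun A B r z = A.card * B.card := by
  classical
  rw [← Finset.card_product]
  exact (Finset.card_eq_sum_card_fiberwise
    (f := fun ab : ZMod M × ZMod M => ab.1 + (r : ZMod M) * ab.2)
    (s := A ×ˢ B) (t := Finset.univ)
    (fun x _ => Finset.mem_univ _)).symm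

end Aux



lemma card_one_unique {α : Type*} {s : Finset α} (h : s.card = 1) {x y : α}
    (hx : x ∈ s) (hy : y ∈ s) : x = y :=
  Finset.card_le_one.mp h.le x hx y hy

lemma sum_split {M q : ℕ} [NeZero q] (g : ZMod q → ZMod M) :
    ∑ i, g i = g 0 + ∑ j : {i : ZMod q // i ≠ 0}, g j.1 := by
  classical
  have h1 : ∑ j : {i : ZMod q // i ≠ 0}, g j.1 = ∑ i ∈ Finset.univ.erase 0, g i :=
    (Finset.sum_subtype _ (fun x => by simp [Finset.mem_erase]) g).symm
  rw [h1]
  exact (Finset.add_sum_erase _ g (Finset.mem_univ 0)).symm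

lemma sum_shift {M q : ℕ} [NeZero q] (g : ZMod q → ZMod M) (k : ZMod q) :
    ∑ i, g (i + k) = ∑ i, g i :=
  Fintype.sum_bijective (· + k) (Equiv.addRight k).bijective _ _ (fun _ => rfl)

lemma Nfun_step {M : ℕ} [NeZero M] {A B : Finset (ZMod M)}
    (hBM : B.card ∣ M) {q : ℕ} (hq : q.Prime) (hqM : ¬ q ∣ M) (s : ℕ)
    (IH : ∀ z : ZMod M, Nfun A B s z = 1) (z : ZMod M) :
    Nfun A B (q * s) z ≡ 1 [MOD q] := by
  classical
  haveI : Fact q.Prime := ⟨hq⟩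
  haveI : NeZero q := ⟨hq.pos.ne'⟩
  set T : Finset (ZMod M × (ZMod q → ZMod M)) :=
    (A ×ˢ Fintype.piFinset (fun _ : ZMod q => B)).filter
      (fun x => x.1 + (s : ZMod M) * ∑ i, x.2 i = z) with hT
  have memT : ∀ x : ZMod M × (ZMod q → ZMod M),
      x ∈ T ↔ (x.1 ∈ A ∧ ∀ i, x.2 i ∈ B) ∧ x.1 + (s : ZMod M) * ∑ i, x.2 i = z := by
    intro x
    simp [hT, Finset.mem_filter, Finset.mem_product, Fintype.mem_piFinset]
  -- (i) : T.card = B.card ^ (q - 1)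
  have hTcard : T.card = B.card ^ (q - 1) := by
    have hbij : T.card =
        (Fintype.piFinset (fun _ : {i : ZMod q // i ≠ 0} => B)).card := by
      apply Finset.card_bij (fun x _ => fun j : {i : ZMod q // i ≠ 0} => x.2 j.1)
      · intro x hx
        rw [Fintype.mem_piFinset]
        exact fun j => ((memT x).mp hx).1.2 j.1
      · intro x hx y hy hxy
        obtain ⟨⟨hxA, hxB⟩, hxz⟩ := (memT x).mp hx
        obtain ⟨⟨hyA, hyB⟩, hyz⟩ := (memT y).mp hy
        have hres : ∀ j : {i : ZMod q // i ≠ 0}, x.2 j.1 = y.2 j.1 :=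
          fun j => congrFun hxy j
        set z' : ZMod M := z - (s : ZMod M) * ∑ j : {i : ZMod q // i ≠ 0}, x.2 j.1 with hz'
        have hxmem : (x.1, x.2 0) ∈
            (A ×ˢ B).filter (fun ab => ab.1 + (s : ZMod M) * ab.2 = z') := by
          rw [Finset.mem_filter, Finset.mem_product]
          refine ⟨⟨hxA, hxB 0⟩, ?_⟩
          rw [sum_split x.2] at hxz
          simp only [hz']
          linear_combination hxz
        have hymem : (y.1, y.2 0) ∈
            (A ×ˢ B).filter (fun ab => ab.1 + (s : ZMod M) * ab.2 = z') := by
          rw [Finset.mem_filter, Finset.mem_product]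
          refine ⟨⟨hyA, hyB 0⟩, ?_⟩
          rw [sum_split y.2] at hyz
          simp only [hz']
          have : ∑ j : {i : ZMod q // i ≠ 0}, y.2 j.1
              = ∑ j : {i : ZMod q // i ≠ 0}, x.2 j.1 :=
            Finset.sum_congr rfl (fun j _ => (hres j).symm)
          rw [this] at hyz
          linear_combination hyz
        have := card_one_unique (IH z') hxmem hymem
        obtain ⟨h1, h0⟩ := Prod.ext_iff.mp this
        have h2 : x.2 = y.2 := by
          funext i
          by_cases hi : i = 0
          · rw [hi]; exact h0
          · exact hres ⟨i, hi⟩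
        exact Prod.ext h1 h2
      · intro h hh
        rw [Fintype.mem_piFinset] at hh
        set z' : ZMod M := z - (s : ZMod M) * ∑ j : {i : ZMod q // i ≠ 0}, h j with hz'
        obtain ⟨ab, hab⟩ := Finset.card_eq_one.mp (IH z')
        have habmem : ab ∈ (A ×ˢ B).filter (fun ab => ab.1 + (s : ZMod M) * ab.2 = z') := by
          rw [hab]; exact Finset.mem_singleton_self ab
        rw [Finset.mem_filter, Finset.mem_product] at habmem
        obtain ⟨⟨haA, hbB⟩, habz⟩ := habmem
        refine ⟨(ab.1, fun i => if hi : i = 0 then ab.2 else h ⟨i, hi⟩), ?_, ?_⟩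
        · rw [memT]
          constructor
          · constructor
            · exact haA
            · intro i
              by_cases hi : i = 0
              · simp only [hi, dif_pos]; exact hbB
              · simp only [dif_neg hi]; exact hh _
          · have e0 : (if hi : (0 : ZMod q) = 0 then ab.2 else h ⟨0, hi⟩) = ab.2 := dif_pos rfl
            rw [sum_split (fun i => if hi : i = 0 then ab.2 else h ⟨i, hi⟩)]
            rw [e0]
            have : ∑ j : {i : ZMod q // i ≠ 0},
                (if hi : j.1 = 0 then ab.2 else h ⟨j.1, hi⟩) = ∑ j : {i : ZMod q // i ≠ 0}, h j := by
              apply Finset.sum_congr rfl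
              intro j _
              rw [dif_neg j.2]
            rw [this]
            rw [hz'] at habz
            linear_combination habz
        · funext j
          simp only [dif_neg j.2]
    rw [hbij, Fintype.card_piFinset]
    simp only [Finset.prod_const, Finset.card_univ]
    congr 1
    rw [Fintype.card_subtype_compl, Fintype.card_subtype_eq, ZMod.card]
  -- (ii) : orbit counting, T.card ≡ Nfun A B (q*s) z [MOD q]
  set F : Finset (ZMod M × ZMod M) :=
    (A ×ˢ B).filter (fun ab => ab.1 + ((q * s : ℕ) : ZMod M) * ab.2 = z) with hF
  have memF : ∀ ab : ZMod M × ZMod M,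
      ab ∈ F ↔ (ab.1 ∈ A ∧ ab.2 ∈ B) ∧ ab.1 + ((q * s : ℕ) : ZMod M) * ab.2 = z := by
    intro ab
    simp [hF, Finset.mem_filter, Finset.mem_product]
  have sum_const_eq : ∀ c : ZMod M, (∑ _i : ZMod q, c) = (q : ZMod M) * c := by
    intro c
    rw [Finset.sum_const, Finset.card_univ, ZMod.card, nsmul_eq_mul]
  have cond_eq : ∀ c d : ZMod M, c + (s : ZMod M) * ((q : ZMod M) * d)
      = c + ((q * s : ℕ) : ZMod M) * d := by
    intro c d
    push_cast
    ring
  letI : SMul (Multiplicative (ZMod q)) {x // x ∈ T} :=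
    ⟨fun k x => ⟨(x.1.1, fun i => x.1.2 (i + Multiplicative.toAdd k)), by
      obtain ⟨⟨hA, hB⟩, hz⟩ := (memT x.1).mp x.2
      rw [memT]
      refine ⟨⟨hA, fun i => hB _⟩, ?_⟩
      rw [sum_shift x.1.2 (Multiplicative.toAdd k)]
      exact hz⟩⟩
  letI actT : MulAction (Multiplicative (ZMod q)) {x // x ∈ T} :=
    { one_smul := by
        intro x
        apply Subtype.ext
        refine Prod.ext_iff.mpr ⟨rfl, ?_⟩
        funext i
        show x.1.2 (i + Multiplicative.toAdd 1) = x.1.2 i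
        rw [toAdd_one, add_zero]
      mul_smul := by
        intro k l x
        apply Subtype.ext
        refine Prod.ext_iff.mpr ⟨rfl, ?_⟩
        funext i
        show x.1.2 (i + Multiplicative.toAdd (k * l))
            = x.1.2 ((i + Multiplicative.toAdd k) + Multiplicative.toAdd l)
        rw [toAdd_mul, add_assoc] }
  have smul_def : ∀ (k : Multiplicative (ZMod q)) (x : {x // x ∈ T}),
      (k • x).1 = (x.1.1, fun i => x.1.2 (i + Multiplicative.toAdd k)) := fun _ _ => rfl
  have hPG : IsPGroup q (Multiplicative (ZMod q)) := by
    apply IsPGroup.of_card (n := 1)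
    rw [Nat.card_eq_fintype_card]
    simp [ZMod.card]
  have hmod := hPG.card_modEq_card_fixedPoints {x // x ∈ T}
  -- fixed points are the constant tuples, in bijection with F
  have hfixcard : Nat.card
      (MulAction.fixedPoints (Multiplicative (ZMod q)) {x // x ∈ T}) = F.card := by
    have hconst : ∀ x : {x // x ∈ T},
        x ∈ MulAction.fixedPoints (Multiplicative (ZMod q)) {x // x ∈ T} →
        ∀ i : ZMod q, x.1.2 i = x.1.2 0 := by
      intro x hx i
      have h1 := hx (Multiplicative.ofAdd i)
      have h2 : x.1.2 (0 + i) = x.1.2 0 := congrArg (fun y : {x // x ∈ T} => y.1.2 0) h1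
      rw [zero_add] at h2
      exact h2
    let e : MulAction.fixedPoints (Multiplicative (ZMod q)) {x // x ∈ T} ≃ {ab // ab ∈ F} :=
      { toFun := fun x => ⟨(x.1.1.1, x.1.1.2 0), by
          obtain ⟨⟨hA, hB⟩, hz⟩ := (memT x.1.1).mp x.1.2
          rw [memF]
          refine ⟨⟨hA, hB 0⟩, ?_⟩
          have hsum : ∑ i, x.1.1.2 i = (q : ZMod M) * x.1.1.2 0 := by
            rw [Finset.sum_congr rfl (fun i _ => hconst x.1 x.2 i)]
            exact sum_const_eq _
          rw [hsum, cond_eq] at hz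
          exact hz⟩
        invFun := fun ab => ⟨⟨(ab.1.1, fun _ => ab.1.2), by
          obtain ⟨⟨hA, hB⟩, hz⟩ := (memF ab.1).mp ab.2
          rw [memT]
          refine ⟨⟨hA, fun _ => hB⟩, ?_⟩
          rw [sum_const_eq, cond_eq]
          exact hz⟩, by
          intro k
          apply Subtype.ext
          refine Prod.ext_iff.mpr ⟨rfl, ?_⟩
          funext i
          rfl⟩
        left_inv := by
          intro x
          apply Subtype.ext
          apply Subtype.ext
          refine Prod.ext_iff.mpr ⟨rfl, ?_⟩
          funext i
          exact (hconst x.1 x.2 i).symm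
        right_inv := by
          intro ab
          apply Subtype.ext
          rfl }
    rw [Nat.card_congr e, Nat.card_eq_fintype_card, Fintype.card_coe]
  have hTcard' : Nat.card {x // x ∈ T} = T.card := by
    rw [Nat.card_eq_fintype_card, Fintype.card_coe]
  rw [hTcard', hfixcard, hTcard] at hmod
  -- Fermat : B.card ^ (q-1) ≡ 1 [MOD q]
  have hferm : B.card ^ (q - 1) ≡ 1 [MOD q] := by
    have hBq : (B.card : ZMod q) ≠ 0 := by
      rw [Ne, ZMod.natCast_eq_zero_iff]
      intro hdvd
      exact hqM (hdvd.trans hBM)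
    have := ZMod.pow_card_sub_one_eq_one hBq
    have hcast : ((B.card ^ (q - 1) : ℕ) : ZMod q) = ((1 : ℕ) : ZMod q) := by
      push_cast
      rw [this]
    exact (ZMod.natCast_eq_natCast_iff _ _ _).mp hcast
  have : Nfun A B (q * s) z = F.card := rfl
  rw [this]
  exact (hmod.symm.trans hferm)


-- helper : divisor of M not divisible by p^n divides M/p
lemma dvd_div_p {M p n d : ℕ} (hp : p.Prime) (hM : M ≠ 0) (hpM : p ∣ M)
    (hpn : p ^ n ∣ M) (hpn1 : ¬ p ^ (n + 1) ∣ M)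
    (hd : d ∣ M) (hdp : ¬ p ^ n ∣ d) : d ∣ M / p := by
  have hd0 : d ≠ 0 := fun h => hM (Nat.eq_zero_of_zero_dvd (h ▸ hd))
  have hMp0 : M / p ≠ 0 := by
    have := Nat.div_pos (Nat.le_of_dvd (Nat.pos_of_ne_zero hM) hpM) hp.pos
    omega
  rw [← Nat.factorization_le_iff_dvd hd0 hMp0]
  rw [Nat.factorization_div hpM, hp.factorization]
  intro q
  rcases eq_or_ne q p with rfl | hq
  · have hMn : M.factorization q = n := by
      have h1 : n ≤ M.factorization q := (Nat.Prime.pow_dvd_iff_le_factorization hp hM).mp hpn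
      have h2 : ¬ (n + 1 ≤ M.factorization q) :=
        fun h => hpn1 ((Nat.Prime.pow_dvd_iff_le_factorization hp hM).mpr h)
      omega
    have hdn : d.factorization q ≤ n - 1 := by
      have h2 : ¬ (n ≤ d.factorization q) :=
        fun h => hdp ((Nat.Prime.pow_dvd_iff_le_factorization hp hd0).mpr h)
      omega
    simp only [Finsupp.tsub_apply, Finsupp.single_eq_same]
    omega
  · have : d.factorization q ≤ M.factorization q :=
      (Nat.factorization_le_iff_dvd hd0 hM).mpr hd q
    simp only [Finsupp.tsub_apply, Finsupp.single_eq_of_ne hq]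
    omega


lemma Nfun_of_modeq {M : ℕ} [NeZero M] {A B : Finset (ZMod M)}
    (hcard : A.card * B.card = M) {r q : ℕ} (hq : 2 ≤ q)
    (h : ∀ z : ZMod M, Nfun A B r z ≡ 1 [MOD q]) : ∀ z : ZMod M, Nfun A B r z = 1 := by
  have hsum : ∑ z : ZMod M, Nfun A B r z = M := by rw [Nfun_sum, hcard]
  have hge : ∀ z : ZMod M, 1 ≤ Nfun A B r z := by
    intro z
    rcases Nat.eq_zero_or_pos (Nfun A B r z) with h0 | h1
    · exfalso
      have h2 := h z
      rw [h0] at h2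
      have h3 : (0 : ℕ) % q = 1 % q := h2
      rw [Nat.zero_mod, Nat.mod_eq_of_lt (by omega)] at h3
      omega
    · exact h1
  intro z
  by_contra hcon
  have hlt : 1 < Nfun A B r z := lt_of_le_of_ne (hge z) (Ne.symm hcon)
  have h1 : ∑ _z : ZMod M, (1 : ℕ) < ∑ z : ZMod M, Nfun A B r z :=
    Finset.sum_lt_sum (fun w _ => hge w) ⟨z, Finset.mem_univ z, hlt⟩
  rw [hsum] at h1
  simp only [Finset.sum_const, Finset.card_univ, smul_eq_mul, mul_one, ZMod.card] at h1
  omega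

lemma Nfun_coprime {M : ℕ} [NeZero M] {A B : Finset (ZMod M)} (hT : IsTiling A B) :
    ∀ r : ℕ, Nat.Coprime r M → ∀ z : ZMod M, Nfun A B r z = 1 := by
  classical
  have hcard := tiling_card hT
  have hBM : B.card ∣ M := Dvd.intro_left A.card hcard
  intro r
  induction r using Nat.strong_induction_on with
  | _ r IH =>
    intro hr z
    rcases Nat.lt_or_ge r 2 with hr2 | hr2
    · interval_cases r
      · have hM1 : M = 1 := (Nat.coprime_zero_left M).mp hr
        have h0 : Nfun A B 0 z = (A ×ˢ B).card := by
          unfold Nfun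
          congr 1
          apply Finset.filter_true_of_mem
          intro ab _
          subst hM1
          exact Subsingleton.elim _ _
        rw [h0, Finset.card_product, hcard, hM1]
      · exact Nfun_one hT z
    · have hr1 : r ≠ 1 := by omega
      set q := r.minFac with hqdef
      have hq : q.Prime := Nat.minFac_prime hr1
      have hqr : q ∣ r := Nat.minFac_dvd r
      obtain ⟨s, hs⟩ := hqr
      have hqM : ¬ q ∣ M := by
        intro hdvd
        have h1 : q ∣ Nat.gcd r M := Nat.dvd_gcd ⟨s, hs⟩ hdvd
        rw [hr] at h1
        exact hq.ne_one (Nat.dvd_one.mp h1)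
      have hslt : s < r := by
        have h2 : 2 * s ≤ q * s := Nat.mul_le_mul_right s hq.two_le
        have hs0 : s ≠ 0 := by
          intro h
          rw [h, mul_zero] at hs
          omega
        omega
      have hsM : Nat.Coprime s M := Nat.Coprime.coprime_dvd_left ⟨q, by rw [hs]; ring⟩ hr
      have hIH := IH s hslt hsM
      have hstep := Nfun_step hBM hq hqM s hIH
      have := Nfun_of_modeq hcard hq.two_le hstep z
      rw [hs]
      exact this

theorem two_point_splitting (M : ℕ) (hM : 0 < M)
    (A B : Finset (ZMod M)) (hT : IsTiling A B)
    (p : ℕ) (hp : p.Prime) (hp2 : p ^ 2 ∣ M)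
    (n : ℕ) (hpn : p ^ n ∣ M) (hpn1 : ¬ p ^ (n + 1) ∣ M)
    (x x' : ZMod M) (hxx' : Nat.gcd (x - x').val M = M / p)
    (a a' b b' : ZMod M)
    (ha : a ∈ A) (ha' : a' ∈ A) (hb : b ∈ B) (hb' : b' ∈ B)
    (hx : a + b = x) (hx' : a' + b' = x') :
    (((p ^ n : ℕ) : ZMod M) ∣ (a - a') ∨ ((p ^ n : ℕ) : ZMod M) ∣ (b - b')) ∧
    ((p ^ (n - 1) : ℕ) : ZMod M) ∣ (a - a') ∧
    ((p ^ (n - 1) : ℕ) : ZMod M) ∣ (b - b') := by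
  classical
  haveI : NeZero M := ⟨hM.ne'⟩
  have hpM : p ∣ M := dvd_trans (dvd_pow_self p two_ne_zero) hp2
  have hn1 : 1 ≤ n := by
    by_contra h
    have hn0 : n = 0 := by omega
    rw [hn0, zero_add, pow_one] at hpn1
    exact hpn1 hpM
  have hpn1_dvd_pn : p ^ (n - 1) ∣ p ^ n := pow_dvd_pow p (by omega)
  have hpnM : p ^ (n - 1) ∣ M := hpn1_dvd_pn.trans hpn
  have hpn1Mp : p ^ (n - 1) ∣ M / p := by
    obtain ⟨k, hk⟩ := hpn
    have hpow : p * p ^ (n - 1) = p ^ n := by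
      calc p * p ^ (n - 1) = p ^ 1 * p ^ (n - 1) := by rw [pow_one]
        _ = p ^ (1 + (n - 1)) := (pow_add p 1 (n - 1)).symm
        _ = p ^ n := by congr 1; omega
    have hM' : M = p * (p ^ (n - 1) * k) := by rw [hk, ← hpow]; ring
    rw [hM', Nat.mul_div_cancel_left _ hp.pos]
    exact Dvd.intro k rfl
  have hMp_dvd_val : (M / p) ∣ (x - x').val := hxx' ▸ Nat.gcd_dvd_left _ _
  have hδ1 : ((p ^ (n - 1) : ℕ) : ZMod M) ∣ (x - x') :=
    (zmod_dvd_iff hpnM _).mpr (hpn1Mp.trans hMp_dvd_val)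
  have hsplit : (x - x') = (a - a') + (b - b') := by rw [← hx, ← hx']; ring
  by_cases h1 : p ^ n ∣ (a - a').val
  · have hu : ((p ^ (n - 1) : ℕ) : ZMod M) ∣ (a - a') :=
      (zmod_dvd_iff hpnM _).mpr (hpn1_dvd_pn.trans h1)
    refine ⟨Or.inl ((zmod_dvd_iff hpn _).mpr h1), hu, ?_⟩
    have hv : (b - b') = (x - x') - (a - a') := by rw [hsplit]; ring
    rw [hv]
    exact dvd_sub hδ1 hu
  by_cases h2 : p ^ n ∣ (b - b').val
  · have hv : ((p ^ (n - 1) : ℕ) : ZMod M) ∣ (b - b') :=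
      (zmod_dvd_iff hpnM _).mpr (hpn1_dvd_pn.trans h2)
    refine ⟨Or.inr ((zmod_dvd_iff hpn _).mpr h2), ?_, hv⟩
    have hu : (a - a') = (x - x') - (b - b') := by rw [hsplit]; ring
    rw [hu]
    exact dvd_sub hδ1 hv
  exfalso
  have hu0 : (a - a') ≠ 0 := by
    intro h
    apply h1
    rw [h, ZMod.val_zero]
    exact dvd_zero _
  have hv0 : (b - b') ≠ 0 := by
    intro h
    apply h2
    rw [h, ZMod.val_zero]
    exact dvd_zero _
  set du := Nat.gcd (a - a').val M with hdu
  set dv := Nat.gcd (b - b').val M with hdv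
  have hduM : du ∣ M := Nat.gcd_dvd_right _ _
  have hdvM : dv ∣ M := Nat.gcd_dvd_right _ _
  have hdu_np : ¬ p ^ n ∣ du := fun h => h1 (h.trans (Nat.gcd_dvd_left _ _))
  have hdv_np : ¬ p ^ n ∣ dv := fun h => h2 (h.trans (Nat.gcd_dvd_left _ _))
  have hduMp : du ∣ M / p := dvd_div_p hp hM.ne' hpM hpn hpn1 hduM hdu_np
  have hdvMp : dv ∣ M / p := dvd_div_p hp hM.ne' hpM hpn hpn1 hdvM hdv_np
  have hduδ : du ∣ (x - x').val := hduMp.trans hMp_dvd_val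
  have hdvδ : dv ∣ (x - x').val := hdvMp.trans hMp_dvd_val
  have hZ : (M : ℤ) ∣ (((a - a').val : ℤ) + ((b - b').val : ℤ) - ((x - x').val : ℤ)) := by
    have h3 : ((((a - a').val : ℤ) + ((b - b').val : ℤ) - ((x - x').val : ℤ) : ℤ) : ZMod M) = 0 := by
      push_cast
      simp only [ZMod.natCast_val, ZMod.cast_id]
      rw [hsplit]
      ring
    exact (ZMod.intCast_zmod_eq_zero_iff_dvd _ M).mp h3
  have hgu_v : du ∣ (b - b').val := by
    have h4 : (du : ℤ) ∣ (((a - a').val : ℤ) + ((b - b').val : ℤ) - ((x - x').val : ℤ)) :=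
      (Int.natCast_dvd_natCast.mpr hduM).trans hZ
    have hA : (du : ℤ) ∣ ((a - a').val : ℤ) := Int.natCast_dvd_natCast.mpr (Nat.gcd_dvd_left _ _)
    have hB : (du : ℤ) ∣ ((x - x').val : ℤ) := Int.natCast_dvd_natCast.mpr hduδ
    have h5 : (((b - b').val : ℤ)) =
        (((a - a').val : ℤ) + ((b - b').val : ℤ) - ((x - x').val : ℤ)) - ((a - a').val : ℤ)
          + ((x - x').val : ℤ) := by ring
    have h6 : (du : ℤ) ∣ ((b - b').val : ℤ) := by
      rw [h5]
      exact dvd_add (dvd_sub h4 hA) hB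
    exact Int.natCast_dvd_natCast.mp h6
  have hgv_u : dv ∣ (a - a').val := by
    have h4 : (dv : ℤ) ∣ (((a - a').val : ℤ) + ((b - b').val : ℤ) - ((x - x').val : ℤ)) :=
      (Int.natCast_dvd_natCast.mpr hdvM).trans hZ
    have hA : (dv : ℤ) ∣ ((b - b').val : ℤ) := Int.natCast_dvd_natCast.mpr (Nat.gcd_dvd_left _ _)
    have hB : (dv : ℤ) ∣ ((x - x').val : ℤ) := Int.natCast_dvd_natCast.mpr hdvδ
    have h5 : (((a - a').val : ℤ)) =
        (((a - a').val : ℤ) + ((b - b').val : ℤ) - ((x - x').val : ℤ)) - ((b - b').val : ℤ)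
          + ((x - x').val : ℤ) := by ring
    have h6 : (dv : ℤ) ∣ ((a - a').val : ℤ) := by
      rw [h5]
      exact dvd_add (dvd_sub h4 hA) hB
    exact Int.natCast_dvd_natCast.mp h6
  have hdeq : du = dv := Nat.dvd_antisymm (Nat.dvd_gcd hgu_v hduM) (Nat.dvd_gcd hgv_u hdvM)
  have hd0 : 0 < du := Nat.gcd_pos_of_pos_right _ hM
  have hdu_dvd : du ∣ (a - a').val := Nat.gcd_dvd_left _ _
  have hdv_dvd : du ∣ (b - b').val := hgu_v
  have hσcop : Nat.Coprime ((a - a').val / du) (M / du) := Nat.coprime_div_gcd_div_gcd hd0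
  have hτcop : Nat.Coprime ((b - b').val / du) (M / du) := by
    rw [hdeq] at hd0 ⊢
    exact Nat.coprime_div_gcd_div_gcd hd0
  have hMdvd : (M / du) ∣ M := Nat.div_dvd_of_dvd hduM
  set σu : (ZMod (M / du))ˣ := ZMod.unitOfCoprime _ hσcop with hσu
  set τu : (ZMod (M / du))ˣ := ZMod.unitOfCoprime _ hτcop with hτu
  obtain ⟨R, hR⟩ := ZMod.unitsMap_surjective hMdvd (σu * τu⁻¹)
  set r := (R : ZMod M).val with hrdef
  have hrcop : Nat.Coprime r M := ZMod.val_coe_unit_coprime R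
  have hkey : ((r : ℕ) : ZMod (M / du)) =
      (σu : ZMod (M / du)) * ((τu⁻¹ : (ZMod (M / du))ˣ) : ZMod (M / du)) := by
    have e1 : ((r : ℕ) : ZMod (M / du)) = ZMod.castHom hMdvd (ZMod (M / du)) (R : ZMod M) := by
      rw [hrdef, ZMod.natCast_val, ZMod.castHom_apply]
    have e2 : ZMod.castHom hMdvd (ZMod (M / du)) (R : ZMod M)
        = ((ZMod.unitsMap hMdvd R : (ZMod (M / du))ˣ) : ZMod (M / du)) := rfl
    rw [e1, e2, hR]
    rfl
  have hmul : ((r * ((b - b').val / du) : ℕ) : ZMod (M / du))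
      = ((((a - a').val / du) : ℕ) : ZMod (M / du)) := by
    push_cast
    rw [hkey]
    have eσ : (((a - a').val / du : ℕ) : ZMod (M / du)) = (σu : ZMod (M / du)) :=
      (ZMod.coe_unitOfCoprime _ hσcop).symm
    have eτ : (((b - b').val / du : ℕ) : ZMod (M / du)) = (τu : ZMod (M / du)) :=
      (ZMod.coe_unitOfCoprime _ hτcop).symm
    rw [eσ, eτ]
    exact Units.inv_mul_cancel_right _ _
  have hmodeq : (r * ((b - b').val / du)) ≡ ((a - a').val / du) [MOD M / du] :=
    (ZMod.natCast_eq_natCast_iff _ _ _).mp hmul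
  have hmod2 := hmodeq.mul_left' (c := du)
  rw [Nat.mul_div_cancel' hduM] at hmod2
  have hmod3 : (r * (b - b').val) ≡ (a - a').val [MOD M] := by
    have e3 : du * (r * ((b - b').val / du)) = r * (b - b').val := by
      rw [Nat.mul_left_comm, Nat.mul_div_cancel' hdv_dvd]
    have e4 : du * ((a - a').val / du) = (a - a').val := Nat.mul_div_cancel' hdu_dvd
    rw [e3, e4] at hmod2
    exact hmod2
  have hru : (r : ZMod M) * (b - b') = (a - a') := by
    have h6 : ((r * (b - b').val : ℕ) : ZMod M) = (((a - a').val : ℕ) : ZMod M) :=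
      (ZMod.natCast_eq_natCast_iff _ _ _).mpr hmod3
    push_cast at h6
    simp only [ZMod.natCast_val, ZMod.cast_id] at h6 ⊢
    exact h6
  have hN : ((A ×ˢ B).filter
      (fun ab => ab.1 + (r : ZMod M) * ab.2 = a + (r : ZMod M) * b')).card = 1 :=
    Nfun_coprime hT r hrcop (a + (r : ZMod M) * b')
  have mem1 : (a, b') ∈ (A ×ˢ B).filter
      (fun ab => ab.1 + (r : ZMod M) * ab.2 = a + (r : ZMod M) * b') := by
    rw [Finset.mem_filter, Finset.mem_product]
    exact ⟨⟨ha, hb'⟩, rfl⟩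
  have mem2 : (a', b) ∈ (A ×ˢ B).filter
      (fun ab => ab.1 + (r : ZMod M) * ab.2 = a + (r : ZMod M) * b') := by
    rw [Finset.mem_filter, Finset.mem_product]
    refine ⟨⟨ha', hb⟩, ?_⟩
    show a' + (r : ZMod M) * b = a + (r : ZMod M) * b'
    linear_combination hru
  have heq := card_one_unique hN mem1 mem2
  have haa : a = a' := (Prod.ext_iff.mp heq).1
  exact hu0 (by rw [haa, sub_self])
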